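/- arXiv:1412.3280 — 4 statements merged into one kernel-verified Lean document; each statement's English description precedes it below -/
import Mathlib

section
/- Let R > 0 and h > 0, and let γ : ℝ → ℝ³ be the helix γ(β) = (R cos β, R sin β, (h/2π)β). Then for every point p = (x, y, z) ∈ ℝ³ with x² + y² < R², there exists a unique triple (β₁, β₂, t) with β₁ < β₂ < β₁ + 2π and t ∈ (0, 1) such that p = (1 − t)·γ(β₁) + t·γ(β₂). In other words, every point strictly inside the helix cylinder lies on exactly one PI-line of the helix. -/
set_option maxHeartbeats 1000000


open Real

noncomputable def fA (v : ℝ) : ℝ := Real.arccos v / Real.sqrt (1 - v ^ 2)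

lemma fA_nonneg (v : ℝ) : 0 ≤ fA v :=
  div_nonneg (Real.arccos_nonneg v) (Real.sqrt_nonneg _)

lemma fA_hasDerivAt {v : ℝ} (h1 : -1 < v) (h2 : v < 1) :
    HasDerivAt fA ((v * fA v - 1) / (1 - v ^ 2)) v := by
  have hv2 : 0 < 1 - v ^ 2 := by nlinarith
  have hs : 0 < Real.sqrt (1 - v ^ 2) := Real.sqrt_pos.2 hv2
  have hsq : Real.sqrt (1 - v ^ 2) ^ 2 = 1 - v ^ 2 := Real.sq_sqrt hv2.le
  have hd1 : HasDerivAt Real.arccos (-(1 / Real.sqrt (1 - v ^ 2))) v :=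
    Real.hasDerivAt_arccos (by linarith) (by linarith)
  have hd2 : HasDerivAt (fun w : ℝ => Real.sqrt (1 - w ^ 2))
      (-(2 * v) / (2 * Real.sqrt (1 - v ^ 2))) v := by
    have hbase : HasDerivAt (fun w : ℝ => 1 - w ^ 2) (-(2 * v)) v := by
      simpa using ((hasDerivAt_pow 2 v).const_sub 1)
    have := (Real.hasDerivAt_sqrt (ne_of_gt hv2)).comp v hbase
    simpa [div_eq_mul_inv, mul_comm, Function.comp_def] using this
  have hd : HasDerivAt fA
      (((-(1 / Real.sqrt (1 - v ^ 2))) * Real.sqrt (1 - v ^ 2) -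
        Real.arccos v * (-(2 * v) / (2 * Real.sqrt (1 - v ^ 2)))) /
        (Real.sqrt (1 - v ^ 2)) ^ 2) v := hd1.div hd2 (ne_of_gt hs)
  convert hd using 1
  rw [hsq]
  unfold fA
  field_simp
  ring

lemma mul_fA_lt_one {v : ℝ} (h1 : -1 < v) (h2 : v < 1) : v * fA v < 1 := by
  rcases le_or_gt v 0 with hv | hv
  · have : v * fA v ≤ 0 := mul_nonpos_of_nonpos_of_nonneg hv (fA_nonneg v)
    linarith
  · set δ := Real.arccos v with hδ
    have hδ0 : 0 < δ := Real.arccos_pos.2 h2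
    have hδπ : δ < π / 2 := Real.arccos_lt_pi_div_two.2 hv
    have hcos : Real.cos δ = v := Real.cos_arccos (by linarith) h2.le
    have hsin : Real.sin δ = Real.sqrt (1 - v ^ 2) := Real.sin_arccos v
    have hsinpos : 0 < Real.sin δ := Real.sin_pos_of_pos_of_lt_pi hδ0 (by linarith [Real.pi_pos])
    have htan : δ < Real.tan δ := Real.lt_tan hδ0 hδπ
    have hcospos : 0 < Real.cos δ := by rw [hcos]; exact hv
    rw [Real.tan_eq_sin_div_cos] at htan
    have key : δ * Real.cos δ < Real.sin δ := by
      rw [lt_div_iff₀ hcospos] at htan; linarith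
    unfold fA
    rw [← hsin, ← hδ, ← hcos]
    rw [mul_div_assoc'] at *
    rw [div_lt_one hsinpos]
    linarith [key]

lemma key_lemma (a b Z : ℝ) (hab : a ^ 2 + b ^ 2 < 1) :
    ∃! m : ℝ,
      m - (a * Real.sin m - b * Real.cos m) * fA (a * Real.cos m + b * Real.sin m) = Z := by
  set P : ℝ → ℝ := fun m => a * Real.cos m + b * Real.sin m with hP
  set Q : ℝ → ℝ := fun m => a * Real.sin m - b * Real.cos m with hQ
  set F : ℝ → ℝ := fun m => m - Q m * fA (P m) with hF
  have hPQ : ∀ m, P m ^ 2 + Q m ^ 2 = a ^ 2 + b ^ 2 := by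
    intro m; simp only [hP, hQ]; nlinarith [Real.sin_sq_add_cos_sq m]
  have hPlt : ∀ m, P m ^ 2 < 1 := by
    intro m; nlinarith [hPQ m, sq_nonneg (Q m)]
  have hP1 : ∀ m, -1 < P m := fun m => by nlinarith [hPlt m]
  have hP2 : ∀ m, P m < 1 := fun m => by nlinarith [hPlt m]
  -- derivative
  have hderiv : ∀ m, HasDerivAt F
      (1 - (P m * fA (P m) + Q m ^ 2 * (1 - P m * fA (P m)) / (1 - P m ^ 2))) m := by
    intro m
    have hdP : HasDerivAt P (-(Q m)) m := by
      have := (((Real.hasDerivAt_cos m).const_mul a).add ((Real.hasDerivAt_sin m).const_mul b))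
      simp only [hP, hQ]
      refine this.congr_deriv ?_
      ring
    have hdQ : HasDerivAt Q (P m) m := by
      have := (((Real.hasDerivAt_sin m).const_mul a).sub ((Real.hasDerivAt_cos m).const_mul b))
      simp only [hP, hQ]
      refine this.congr_deriv ?_
      ring
    have hdfP : HasDerivAt (fun m => fA (P m))
        (((P m * fA (P m) - 1) / (1 - P m ^ 2)) * (-(Q m))) m :=
      (fA_hasDerivAt (hP1 m) (hP2 m)).comp m hdP
    have hdG : HasDerivAt (fun m => Q m * fA (P m))
        (P m * fA (P m) + Q m * (((P m * fA (P m) - 1) / (1 - P m ^ 2)) * (-(Q m)))) m :=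
      hdQ.mul hdfP
    have := (hasDerivAt_id m).sub hdG
    refine this.congr_deriv ?_
    have h2 : (1 : ℝ) - P m ^ 2 ≠ 0 := by nlinarith [hPlt m]
    field_simp
    ring
  have hpos : ∀ m,
      0 < 1 - (P m * fA (P m) + Q m ^ 2 * (1 - P m * fA (P m)) / (1 - P m ^ 2)) := by
    intro m
    have hA : P m * fA (P m) < 1 := mul_fA_lt_one (hP1 m) (hP2 m)
    have h2 : (0 : ℝ) < 1 - P m ^ 2 := by nlinarith [hPlt m]
    have hq : Q m ^ 2 < 1 - P m ^ 2 := by nlinarith [hPQ m]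
    have : Q m ^ 2 * (1 - P m * fA (P m)) / (1 - P m ^ 2) < 1 - P m * fA (P m) := by
      rw [div_lt_iff₀ h2]
      nlinarith [sq_nonneg (Q m)]
    linarith
  have hmono : StrictMono F := by
    apply strictMono_of_deriv_pos
    intro m
    rw [(hderiv m).deriv]
    exact hpos m
  have hcont : Continuous F :=
    (Differentiable.continuous (fun m => (hderiv m).differentiableAt))
  -- bound on the perturbation
  set C : ℝ := π / Real.sqrt (1 - (a ^ 2 + b ^ 2)) with hC
  have hsab : 0 < Real.sqrt (1 - (a ^ 2 + b ^ 2)) := Real.sqrt_pos.2 (by linarith)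
  have hCpos : 0 < C := div_pos Real.pi_pos hsab
  have hbound : ∀ m, |Q m * fA (P m)| ≤ C := by
    intro m
    have hQ1 : |Q m| ≤ 1 := by
      rw [abs_le]; constructor <;> nlinarith [hPQ m, sq_nonneg (P m)]
    have hfb : fA (P m) ≤ C := by
      unfold fA
      rw [hC]
      apply div_le_div₀ (Real.pi_pos.le) (Real.arccos_le_pi _) hsab
      apply Real.sqrt_le_sqrt
      nlinarith [hPQ m, sq_nonneg (Q m)]
    calc |Q m * fA (P m)| = |Q m| * |fA (P m)| := abs_mul _ _
      _ ≤ 1 * C := by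
          apply mul_le_mul hQ1 _ (abs_nonneg _) zero_le_one
          rwa [abs_of_nonneg (fA_nonneg _)]
      _ = C := one_mul C
  -- existence via IVT
  have h1 : F (Z - C - 1) ≤ Z - 1 := by
    have := hbound (Z - C - 1)
    simp only [hF]
    have := abs_le.1 this
    linarith [this.1]
  have h2 : Z + 1 ≤ F (Z + C + 1) := by
    have := abs_le.1 (hbound (Z + C + 1))
    simp only [hF]
    linarith [this.2]
  have hZmem : Z ∈ Set.Icc (F (Z - C - 1)) (F (Z + C + 1)) := ⟨by linarith, by linarith⟩
  have := intermediate_value_Icc (by linarith : Z - C - 1 ≤ Z + C + 1) hcont.continuousOn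
  obtain ⟨m₀, _, hm₀⟩ := this hZmem
  exact ⟨m₀, hm₀, fun y hy => hmono.injective (hy.trans hm₀.symm)⟩

/-- Helix property: every point strictly inside the helix cylinder lies on
exactly one PI-line of the helix
`γ(β) = (R cos β, R sin β, (h/2π)β)`. -/
theorem helix_pi_line_unique (R h : ℝ) (hR : 0 < R) (hh : 0 < h)
    (γ : ℝ → ℝ × ℝ × ℝ)
    (hγ : ∀ β : ℝ, γ β = (R * Real.cos β, R * Real.sin β, h / (2 * Real.pi) * β))
    (x y z : ℝ) (hp : x ^ 2 + y ^ 2 < R ^ 2) :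
    ∃! q : ℝ × ℝ × ℝ,
      (q.1 < q.2.1 ∧ q.2.1 < q.1 + 2 * Real.pi ∧ q.2.2 ∈ Set.Ioo (0 : ℝ) 1) ∧
      (x, y, z) = (1 - q.2.2) • γ q.1 + q.2.2 • γ q.2.1 := by
  have hR' : R ≠ 0 := ne_of_gt hR
  have hh' : h ≠ 0 := ne_of_gt hh
  have hπ : (0:ℝ) < π := Real.pi_pos
  set a : ℝ := x / R with hadef
  set b : ℝ := y / R with hbdef
  set Z : ℝ := 2 * π * z / h with hZdef
  have hab : a ^ 2 + b ^ 2 < 1 := by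
    rw [hadef, hbdef, div_pow, div_pow, ← add_div, div_lt_one (by positivity)]
    exact hp
  obtain ⟨m₀, hm₀, huniq⟩ := key_lemma a b Z hab
  set P₀ : ℝ := a * Real.cos m₀ + b * Real.sin m₀ with hP₀def
  set Q₀ : ℝ := a * Real.sin m₀ - b * Real.cos m₀ with hQ₀def
  have hPQ₀ : P₀ ^ 2 + Q₀ ^ 2 = a ^ 2 + b ^ 2 := by
    rw [hP₀def, hQ₀def]; nlinarith [Real.sin_sq_add_cos_sq m₀]
  have hP₀sq : P₀ ^ 2 < 1 := by nlinarith [sq_nonneg Q₀]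
  have hP₀1 : -1 < P₀ := by nlinarith
  have hP₀2 : P₀ < 1 := by nlinarith
  set δ₀ : ℝ := Real.arccos P₀ with hδ₀def
  set s₀ : ℝ := Real.sqrt (1 - P₀ ^ 2) with hs₀def
  have hs₀pos : 0 < s₀ := Real.sqrt_pos.2 (by nlinarith)
  have hs₀sq : s₀ ^ 2 = 1 - P₀ ^ 2 := Real.sq_sqrt (by nlinarith)
  have hδ₀pos : 0 < δ₀ := Real.arccos_pos.2 hP₀2
  have hδ₀lt : δ₀ < π :=
    lt_of_le_of_ne (Real.arccos_le_pi P₀) fun hc => by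
      have := Real.arccos_eq_pi.1 hc; linarith
  have hcosδ₀ : Real.cos δ₀ = P₀ := Real.cos_arccos (by linarith) hP₀2.le
  have hsinδ₀ : Real.sin δ₀ = s₀ := Real.sin_arccos P₀
  set u₀ : ℝ := Q₀ / s₀ with hu₀def
  have hu₀s : u₀ * s₀ = Q₀ := by
    rw [hu₀def]; field_simp
  have hQ₀sq : Q₀ ^ 2 < 1 - P₀ ^ 2 := by nlinarith
  have hu₀sq : u₀ ^ 2 < 1 := by
    rw [hu₀def, div_pow, div_lt_one (by positivity), hs₀sq]; exact hQ₀sq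
  have hu₀1 : -1 < u₀ := by nlinarith
  have hu₀2 : u₀ < 1 := by nlinarith
  set t₀ : ℝ := (1 - u₀) / 2 with ht₀def
  set β₁ : ℝ := m₀ - δ₀ with hβ₁def
  set β₂ : ℝ := m₀ + δ₀ with hβ₂def
  have hfA₀ : fA P₀ = δ₀ / s₀ := rfl
  -- key algebraic identities for the witness
  have hxkey : Real.cos m₀ * P₀ + Real.sin m₀ * Q₀ = a := by
    rw [hP₀def, hQ₀def]; linear_combination a * Real.sin_sq_add_cos_sq m₀
  have hykey : Real.sin m₀ * P₀ - Real.cos m₀ * Q₀ = b := by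
    rw [hP₀def, hQ₀def]; linear_combination b * Real.sin_sq_add_cos_sq m₀
  have hax : R * a = x := by rw [hadef]; field_simp
  have hby : R * b = y := by rw [hbdef]; field_simp
  have hx : (1 - t₀) * (R * Real.cos β₁) + t₀ * (R * Real.cos β₂) = x := by
    rw [hβ₁def, hβ₂def, Real.cos_sub, Real.cos_add, hcosδ₀, hsinδ₀]
    have : (1 - t₀) * (R * (Real.cos m₀ * P₀ + Real.sin m₀ * s₀)) +
        t₀ * (R * (Real.cos m₀ * P₀ - Real.sin m₀ * s₀)) =
        R * (Real.cos m₀ * P₀ + Real.sin m₀ * (u₀ * s₀)) := by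
      rw [ht₀def]; ring
    rw [this, hu₀s, hxkey, hax]
  have hy : (1 - t₀) * (R * Real.sin β₁) + t₀ * (R * Real.sin β₂) = y := by
    rw [hβ₁def, hβ₂def, Real.sin_sub, Real.sin_add, hcosδ₀, hsinδ₀]
    have : (1 - t₀) * (R * (Real.sin m₀ * P₀ - Real.cos m₀ * s₀)) +
        t₀ * (R * (Real.sin m₀ * P₀ + Real.cos m₀ * s₀)) =
        R * (Real.sin m₀ * P₀ - Real.cos m₀ * (u₀ * s₀)) := by
      rw [ht₀def]; ring
    rw [this, hu₀s, hykey, hby]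
  have hQfA : Q₀ * fA P₀ = u₀ * δ₀ := by
    rw [hfA₀, hu₀def]; field_simp
  have hmZ : m₀ - u₀ * δ₀ = Z := by rw [← hQfA]; exact hm₀
  have hz : (1 - t₀) * (h / (2 * π) * β₁) + t₀ * (h / (2 * π) * β₂) = z := by
    have e1 : (1 - t₀) * (h / (2 * π) * β₁) + t₀ * (h / (2 * π) * β₂) =
        h / (2 * π) * (m₀ - u₀ * δ₀) := by
      rw [hβ₁def, hβ₂def, ht₀def]; ring
    rw [e1, hmZ, hZdef]
    field_simp
  refine ⟨(β₁, β₂, t₀), ⟨⟨by simp only; linarith, by simp only; linarith,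
      ⟨by simp only [ht₀def]; linarith, by simp only [ht₀def]; linarith⟩⟩, ?_⟩, ?_⟩
  · rw [hγ, hγ]
    simp only [Prod.smul_mk, smul_eq_mul, Prod.mk_add_mk, Prod.mk.injEq]
    exact ⟨hx.symm, hy.symm, hz.symm⟩
  · rintro ⟨β₁', β₂', t'⟩ ⟨⟨h1, h2, h3, h4⟩, heq⟩
    simp only at h1 h2 h3 h4 heq ⊢
    rw [hγ, hγ] at heq
    simp only [Prod.smul_mk, smul_eq_mul, Prod.mk_add_mk, Prod.mk.injEq] at heq
    obtain ⟨hex, hey, hez⟩ := heq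
    set m : ℝ := (β₁' + β₂') / 2 with hmdef
    set δ : ℝ := (β₂' - β₁') / 2 with hδdef
    set u : ℝ := 1 - 2 * t' with hudef
    have e1 : β₁' = m - δ := by rw [hmdef, hδdef]; ring
    have e2 : β₂' = m + δ := by rw [hmdef, hδdef]; ring
    have hδpos : 0 < δ := by rw [hδdef]; linarith
    have hδlt : δ < π := by rw [hδdef]; linarith
    have hsinδ : 0 < Real.sin δ := Real.sin_pos_of_pos_of_lt_pi hδpos hδlt
    have hs := Real.sin_sq_add_cos_sq m
    have hPm : a * Real.cos m + b * Real.sin m = Real.cos δ := by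
      rw [hadef, hbdef, div_mul_eq_mul_div, div_mul_eq_mul_div, ← add_div,
        div_eq_iff hR', hex, hey, e1, e2, Real.cos_sub, Real.cos_add,
        Real.sin_sub, Real.sin_add]
      linear_combination (R * Real.cos δ) * hs
    have hQm : a * Real.sin m - b * Real.cos m = u * Real.sin δ := by
      rw [hadef, hbdef, div_mul_eq_mul_div, div_mul_eq_mul_div, div_sub_div_same,
        div_eq_iff hR', hex, hey, e1, e2, Real.cos_sub, Real.cos_add,
        Real.sin_sub, Real.sin_add, hudef]
      linear_combination (R * (1 - 2 * t') * Real.sin δ) * hs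
    have hzm : m - u * δ = Z := by
      have e3 : h / (2 * π) * (m - u * δ) = z := by
        rw [hez, e1, e2, hudef]; ring
      rw [hZdef, ← e3]
      field_simp
    have hfAδ : fA (Real.cos δ) = δ / Real.sin δ := by
      unfold fA
      rw [Real.arccos_cos hδpos.le hδlt.le]
      congr 1
      have : 1 - Real.cos δ ^ 2 = Real.sin δ ^ 2 := by
        rw [Real.sin_sq]
      rw [this, Real.sqrt_sq hsinδ.le]
    have hFm : m - (a * Real.sin m - b * Real.cos m) *
        fA (a * Real.cos m + b * Real.sin m) = Z := by
      rw [hQm, hPm, hfAδ]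
      have : u * Real.sin δ * (δ / Real.sin δ) = u * δ := by
        field_simp
      rw [this]; exact hzm
    have hmm : m = m₀ := huniq m hFm
    have hPP : Real.cos δ = P₀ := by rw [← hPm, hmm, hP₀def]
    have hδδ : δ = δ₀ := by
      rw [hδ₀def, ← hPP, Real.arccos_cos hδpos.le hδlt.le]
    have hQQ : u * Real.sin δ = Q₀ := by rw [← hQm, hmm, hQ₀def]
    have hsin' : Real.sin δ = s₀ := by rw [hδδ, hsinδ₀]
    have huu : u = u₀ := by
      rw [hu₀def, ← hQQ, hsin']
      field_simp
    have ht' : t' = t₀ := by rw [ht₀def, ← huu, hudef]; ring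
    refine Prod.ext ?_ (Prod.ext ?_ ?_) <;> simp only
    · rw [e1, hmm, hδδ, hβ₁def]
    · rw [e2, hmm, hδδ, hβ₂def]
    · exact ht'
end

section
/- Let r̄ be a real number with 0 ≤ r̄ < 1 and let k ∈ ℤ. Then (1/2π)·∫_{−π}^{π} e^{−ikβ}/(1 + r̄² − 2r̄ cos β) dβ = r̄^{|k|}/(1 − r̄²). -/
open Complex Real intervalIntegral

lemma integral_exp_int (m : ℤ) :
    ∫ β in (-Real.pi)..Real.pi, Complex.exp ((m : ℂ) * β * I) =
      if m = 0 then (2 * Real.pi : ℂ) else 0 := by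
  split_ifs with h
  · subst h; simp [two_mul]
  · have hc : (m : ℂ) * I ≠ 0 := by
      simp [Complex.ext_iff, h]
    have := integral_exp_mul_complex (a := -Real.pi) (b := Real.pi) hc
    have h2 : ∀ β : ℝ, (m : ℂ) * (β:ℂ) * I = ((m:ℂ) * I) * β := by intro β; ring
    simp_rw [h2]
    rw [this]
    have e1 : Complex.exp ((m:ℂ) * I * (Real.pi:ℂ)) = (-1 : ℂ) ^ m := by
      rw [show (m:ℂ) * I * (Real.pi:ℂ) = m * (Real.pi * I) by ring,
        Complex.exp_int_mul, Complex.exp_pi_mul_I]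
    have e2 : Complex.exp ((m:ℂ) * I * ((-Real.pi:ℝ):ℂ)) = (-1 : ℂ) ^ m := by
      push_cast
      rw [show (m:ℂ) * I * (-(Real.pi:ℂ)) = ((-m : ℤ):ℂ) * (Real.pi * I) by push_cast; ring,
        Complex.exp_int_mul, Complex.exp_pi_mul_I, zpow_neg, ← inv_zpow,
        show ((-1:ℂ))⁻¹ = -1 by norm_num]
    rw [e1, e2]
    simp

/-- The `k`-th Fourier coefficient of `g₃(β) = 1/(1 + r̄² − 2 r̄ cos β)`,
for `0 ≤ r̄ < 1`, equals `r̄^{|k|}/(1 − r̄²)`. -/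
theorem fourier_coeff_g3 (r : ℝ) (hr0 : 0 ≤ r) (hr1 : r < 1) (k : ℤ) :
    (1 / (2 * (Real.pi : ℂ))) *
        ∫ β in (-Real.pi)..Real.pi,
          Complex.exp (-Complex.I * (k : ℂ) * (β : ℂ)) /
            ((1 + r ^ 2 - 2 * r * Real.cos β : ℝ) : ℂ)
      = ((r ^ k.natAbs / (1 - r ^ 2) : ℝ) : ℂ) := by
  have hπ := Real.pi_pos
  have hr2 : (1:ℝ) - r^2 ≠ 0 := by nlinarith
  have hr2' : (1:ℂ) - (r:ℂ)^2 ≠ 0 := by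
    intro h
    apply hr2
    have h2 : ((1 - r^2 : ℝ):ℂ) = 0 := by push_cast; linear_combination h
    exact_mod_cast h2
  -- geometric series facts for points on the unit circle
  have key : ∀ z : ℂ, ‖z‖ = 1 →
      ((1:ℂ) - r*z ≠ 0 ∧ ∑' n:ℕ, ((r:ℂ)*z)^n = (1 - (r:ℂ)*z)⁻¹) := by
    intro z hz
    have hn : ‖(r:ℂ)*z‖ < 1 := by
      rw [norm_mul, hz, mul_one, Complex.norm_real, Real.norm_eq_abs, _root_.abs_of_nonneg hr0]
      exact hr1
    refine ⟨fun h => ?_, tsum_geometric_of_norm_lt_one hn⟩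
    have h1 : (r:ℂ)*z = 1 := by linear_combination -h
    rw [h1] at hn
    simp at hn
  have habs : ∀ β : ℝ, ‖Complex.exp ((β:ℂ) * I)‖ = 1 := Complex.norm_exp_ofReal_mul_I
  have habs' : ∀ β : ℝ, ‖Complex.exp (-(β:ℂ) * I)‖ = 1 := fun β => by
    rw [show -(β:ℂ) = ((-β : ℝ):ℂ) by push_cast; ring]
    exact Complex.norm_exp_ofReal_mul_I _
  set g : ℕ → ℝ → ℂ := fun n β =>
    (r:ℂ)^n * Complex.exp (((((n:ℤ) - k : ℤ)):ℂ) * (β:ℂ) * I) with hgdef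
  set h : ℕ → ℝ → ℂ := fun n β =>
    (r:ℂ)^(n+1) * Complex.exp ((((-(n:ℤ) - 1 - k : ℤ)):ℂ) * (β:ℂ) * I) with hhdef
  set A : ℝ → ℂ := fun β =>
    Complex.exp (-I * k * β) * (1 - (r:ℂ) * Complex.exp ((β:ℂ) * I))⁻¹ with hAdef
  set B : ℝ → ℂ := fun β =>
    Complex.exp (-I * k * β) * ((r:ℂ) * Complex.exp (-(β:ℂ) * I)) *
      (1 - (r:ℂ) * Complex.exp (-(β:ℂ) * I))⁻¹ with hBdef
  have hgA : ∀ β : ℝ, ∑' n:ℕ, g n β = A β := by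
    intro β
    have h1 : ∀ n:ℕ, g n β = ((r:ℂ) * Complex.exp ((β:ℂ) * I))^n *
        Complex.exp (-I * (k:ℂ) * β) := by
      intro n
      simp only [hgdef]
      rw [mul_pow, show ((((n:ℤ)-k : ℤ)):ℂ) * (β:ℂ) * I
          = (n:ℕ)*((β:ℂ)*I) + (-I*(k:ℂ)*β) by push_cast; ring,
        Complex.exp_add, Complex.exp_nat_mul]
      ring
    rw [tsum_congr h1, tsum_mul_right, (key _ (habs β)).2]
    rw [hAdef]; ring
  have hhB : ∀ β : ℝ, ∑' n:ℕ, h n β = B β := by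
    intro β
    have h1 : ∀ n:ℕ, h n β = ((r:ℂ) * Complex.exp (-(β:ℂ) * I))^n *
        (Complex.exp (-I * (k:ℂ) * β) * ((r:ℂ) * Complex.exp (-(β:ℂ) * I))) := by
      intro n
      simp only [hhdef]
      rw [mul_pow, show ((((-(n:ℤ)-1-k : ℤ)):ℂ)) * (β:ℂ) * I
          = (n:ℕ)*(-(β:ℂ)*I) + (-I*(k:ℂ)*β + -(β:ℂ)*I) by push_cast; ring,
        Complex.exp_add, Complex.exp_nat_mul, Complex.exp_add, pow_succ]
      ring
    rw [tsum_congr h1, tsum_mul_right, (key _ (habs' β)).2]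
    rw [hBdef]; ring
  -- pointwise identity
  have hpoint : ∀ β : ℝ,
      Complex.exp (-I * (k:ℂ) * β) / ((1 + r ^ 2 - 2 * r * Real.cos β : ℝ) : ℂ)
        = (1 - (r:ℂ)^2)⁻¹ * (A β + B β) := by
    intro β
    have hzz : Complex.exp ((β:ℂ) * I) * Complex.exp (-(β:ℂ) * I) = 1 := by
      rw [← Complex.exp_add]; simp
    have hD : ((1 + r ^ 2 - 2 * r * Real.cos β : ℝ) : ℂ)
        = (1 - (r:ℂ) * Complex.exp ((β:ℂ) * I)) * (1 - (r:ℂ) * Complex.exp (-(β:ℂ) * I)) := by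
      push_cast
      rw [Complex.cos]
      linear_combination (-(r:ℂ)^2 : ℂ) * hzz
    have h1 := (key _ (habs β)).1
    have h2 := (key _ (habs' β)).1
    have e1 := inv_mul_cancel₀ h1
    have e2 := inv_mul_cancel₀ h2
    have e3 := inv_mul_cancel₀ hr2'
    rw [hD, div_eq_iff (mul_ne_zero h1 h2)]
    simp only [hAdef, hBdef]
    linear_combination
      (-(((1:ℂ) - (r:ℂ)^2)⁻¹ * Complex.exp (-I * (k:ℂ) * β) *
          (1 - (r:ℂ) * Complex.exp (-(β:ℂ) * I)))) * e1 +
      (-(((1:ℂ) - (r:ℂ)^2)⁻¹ * Complex.exp (-I * (k:ℂ) * β) * (r:ℂ) *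
          Complex.exp (-(β:ℂ) * I) * (1 - (r:ℂ) * Complex.exp ((β:ℂ) * I)))) * e2 +
      (-(Complex.exp (-I * (k:ℂ) * β))) * e3 +
      (((1:ℂ) - (r:ℂ)^2)⁻¹ * Complex.exp (-I * (k:ℂ) * β) * (r:ℂ)^2) * hzz
  -- continuity
  have hAc : Continuous A := by
    rw [hAdef]
    refine Continuous.mul (by fun_prop) (Continuous.inv₀ (by fun_prop) ?_)
    exact fun β => (key _ (habs β)).1
  have hBc : Continuous B := by
    rw [hBdef]
    refine Continuous.mul (by fun_prop) (Continuous.inv₀ (by fun_prop) ?_)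
    exact fun β => (key _ (habs' β)).1
  -- bundled continuous maps
  set G : ℕ → C(ℝ, ℂ) := fun n => ⟨g n, by simp only [hgdef]; fun_prop⟩ with hGdef
  set H : ℕ → C(ℝ, ℂ) := fun n => ⟨h n, by simp only [hhdef]; fun_prop⟩ with hHdef
  have normg : ∀ (n:ℕ) (x:ℝ), ‖g n x‖ = r^n := by
    intro n x
    simp only [hgdef]
    rw [norm_mul, norm_pow, Complex.norm_real, Real.norm_eq_abs, _root_.abs_of_nonneg hr0,
      show ((((n:ℤ)-k:ℤ)):ℂ) * (x:ℂ) * I = (((((n:ℤ)-k:ℤ):ℝ) * x : ℝ):ℂ) * I by push_cast; ring,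
      Complex.norm_exp_ofReal_mul_I, mul_one]
  have normh : ∀ (n:ℕ) (x:ℝ), ‖h n x‖ = r^(n+1) := by
    intro n x
    simp only [hhdef]
    rw [norm_mul, norm_pow, Complex.norm_real, Real.norm_eq_abs, _root_.abs_of_nonneg hr0,
      show (((-(n:ℤ)-1-k:ℤ)):ℂ) * (x:ℂ) * I = ((((-(n:ℤ)-1-k:ℤ):ℝ) * x : ℝ):ℂ) * I by push_cast; ring,
      Complex.norm_exp_ofReal_mul_I, mul_one]
  set K : TopologicalSpace.Compacts ℝ :=
    ⟨Set.uIcc (-Real.pi) Real.pi, isCompact_uIcc⟩ with hKdef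
  have hGsum : Summable (fun n : ℕ => ‖(G n).restrict K‖) := by
    refine Summable.of_nonneg_of_le (fun n => norm_nonneg _) (fun n => ?_)
      (summable_geometric_of_lt_one hr0 hr1)
    rw [ContinuousMap.norm_le _ (pow_nonneg hr0 n)]
    intro x
    rw [ContinuousMap.restrict_apply]
    exact le_of_eq (normg n x)
  have hHsum : Summable (fun n : ℕ => ‖(H n).restrict K‖) := by
    refine Summable.of_nonneg_of_le (fun n => norm_nonneg _) (fun n => ?_)
      ((summable_geometric_of_lt_one hr0 hr1).mul_left r)
    rw [show r * r^n = r^(n+1) by ring, ContinuousMap.norm_le _ (pow_nonneg hr0 (n+1))]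
    intro x
    rw [ContinuousMap.restrict_apply]
    exact le_of_eq (normh n x)
  -- termwise integrals
  have intg : ∀ n:ℕ, (∫ β in (-Real.pi)..Real.pi, g n β)
      = (r:ℂ)^n * (if ((n:ℤ) - k : ℤ) = 0 then (2*Real.pi:ℂ) else 0) := by
    intro n
    simp only [hgdef]
    rw [intervalIntegral.integral_const_mul, integral_exp_int]
  have inth : ∀ n:ℕ, (∫ β in (-Real.pi)..Real.pi, h n β)
      = (r:ℂ)^(n+1) * (if (-(n:ℤ) - 1 - k : ℤ) = 0 then (2*Real.pi:ℂ) else 0) := by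
    intro n
    simp only [hhdef]
    rw [intervalIntegral.integral_const_mul, integral_exp_int]
  -- interchange
  have hIA : (∫ β in (-Real.pi)..Real.pi, A β) = ∑' n:ℕ, ∫ β in (-Real.pi)..Real.pi, g n β := by
    have hti := tsum_intervalIntegral_eq_of_summable_norm (a := -Real.pi) (b := Real.pi) hGsum
    simp only [hGdef, ContinuousMap.coe_mk] at hti
    rw [intervalIntegral.integral_congr (g := fun β => ∑' n:ℕ, g n β) (fun β _ => (hgA β).symm),
      ← hti]
  have hIB : (∫ β in (-Real.pi)..Real.pi, B β) = ∑' n:ℕ, ∫ β in (-Real.pi)..Real.pi, h n β := by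
    have hti := tsum_intervalIntegral_eq_of_summable_norm (a := -Real.pi) (b := Real.pi) hHsum
    simp only [hHdef, ContinuousMap.coe_mk] at hti
    rw [intervalIntegral.integral_congr (g := fun β => ∑' n:ℕ, h n β) (fun β _ => (hhB β).symm),
      ← hti]
  have hI : (∫ β in (-Real.pi)..Real.pi,
        Complex.exp (-I * (k:ℂ) * β) / ((1 + r ^ 2 - 2 * r * Real.cos β : ℝ) : ℂ))
      = (1 - (r:ℂ)^2)⁻¹ *
        ((∑' n:ℕ, ∫ β in (-Real.pi)..Real.pi, g n β) +
         (∑' n:ℕ, ∫ β in (-Real.pi)..Real.pi, h n β)) := by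
    rw [intervalIntegral.integral_congr (g := fun β => (1-(r:ℂ)^2)⁻¹ * (A β + B β))
        (fun β _ => hpoint β),
      intervalIntegral.integral_const_mul,
      intervalIntegral.integral_add (hAc.intervalIntegrable _ _) (hBc.intervalIntegrable _ _),
      hIA, hIB]
  -- evaluate the two sums
  have hsums : (∑' n:ℕ, ∫ β in (-Real.pi)..Real.pi, g n β) +
      (∑' n:ℕ, ∫ β in (-Real.pi)..Real.pi, h n β) = (2*Real.pi:ℂ) * (r:ℂ)^k.natAbs := by
    simp_rw [intg, inth]
    rcases le_or_gt 0 k with hk | hk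
    · have hJB : (∑' n:ℕ, (r:ℂ)^(n+1) * (if (-(n:ℤ) - 1 - k : ℤ) = 0 then (2*Real.pi:ℂ) else 0)) = 0 := by
        have : ∀ n:ℕ, (r:ℂ)^(n+1) * (if (-(n:ℤ) - 1 - k : ℤ) = 0 then (2*Real.pi:ℂ) else 0) = 0 := by
          intro n
          have hne : ¬(-(n:ℤ) - 1 - k = 0) := by omega
          simp [hne]
        rw [tsum_congr this, tsum_zero]
      rw [hJB, add_zero, tsum_eq_single k.natAbs]
      · have hc : ((k.natAbs:ℤ) - k : ℤ) = 0 := by omega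
        rw [hc]; simp; ring
      · intro n hn
        have hne : ¬((n:ℤ) - k = 0) := by omega
        simp [hne]
    · have hJA : (∑' n:ℕ, (r:ℂ)^n * (if ((n:ℤ) - k : ℤ) = 0 then (2*Real.pi:ℂ) else 0)) = 0 := by
        have : ∀ n:ℕ, (r:ℂ)^n * (if ((n:ℤ) - k : ℤ) = 0 then (2*Real.pi:ℂ) else 0) = 0 := by
          intro n
          have hne : ¬((n:ℤ) - k = 0) := by omega
          simp [hne]
        rw [tsum_congr this, tsum_zero]
      rw [hJA, zero_add, tsum_eq_single (k.natAbs - 1)]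
      · have hc : (-(((k.natAbs - 1 : ℕ)):ℤ) - 1 - k : ℤ) = 0 := by omega
        rw [hc]
        have hp : k.natAbs - 1 + 1 = k.natAbs := by omega
        rw [hp]; simp; ring
      · intro n hn
        have hne : ¬(-(n:ℤ) - 1 - k = 0) := by omega
        simp [hne]
  -- finish
  rw [hI, hsums]
  have hπc : (Real.pi : ℂ) ≠ 0 := by exact_mod_cast Real.pi_ne_zero
  push_cast
  field_simp
end

section
/- Let B > 0 and W > 0. Then ∫_{−W}^{W} (4/ω⁴)·(ωB·cos(Bω) − sin(Bω))² dω = 4B³·[ (2/3)·∫_{0}^{2WB} (sin x / x) dx + (2WB·sin(2WB) + (1 + W²B²)·cos(2WB) − 1 − 3W²B²)/(3·(WB)³) ]. -/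
open Real Filter MeasureTheory intervalIntegral

private lemma mvt_bound (u : ℝ) : |Real.sin u - u * Real.cos u| ≤ |u| ^ 3 := by
  have key : ‖(Real.sin u - u * Real.cos u) - (Real.sin 0 - 0 * Real.cos 0)‖
      ≤ u ^ 2 * ‖u - 0‖ := by
    apply Convex.norm_image_sub_le_of_norm_hasDerivWithin_le
      (f := fun t : ℝ => Real.sin t - t * Real.cos t)
      (f' := fun t : ℝ => t * Real.sin t) (s := Set.uIcc 0 u)
    · intro t _
      have h1 : HasDerivAt Real.sin (Real.cos t) t := Real.hasDerivAt_sin t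
      have h2 : HasDerivAt (fun t : ℝ => t * Real.cos t)
          (1 * Real.cos t + t * (-Real.sin t)) t :=
        (hasDerivAt_id t).mul (Real.hasDerivAt_cos t)
      have h3 := h1.sub h2
      have h4 : Real.cos t - (1 * Real.cos t + t * (-Real.sin t)) = t * Real.sin t := by ring
      rw [h4] at h3
      exact h3.hasDerivWithinAt
    · intro t ht
      have ht' : |t| ≤ |u| := by
        rw [Set.uIcc_eq_union] at ht
        rcases ht with h | h
        · rw [Set.mem_Icc] at h
          rw [abs_of_nonneg h.1]
          exact le_trans h.2 (le_abs_self u)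
        · rw [Set.mem_Icc] at h
          rw [abs_of_nonpos h.2]
          exact le_trans (neg_le_neg h.1) (neg_le_abs u)
      calc ‖t * Real.sin t‖ = |t| * |Real.sin t| := abs_mul t _
        _ ≤ |t| * |t| := mul_le_mul_of_nonneg_left (Real.abs_sin_le_abs) (abs_nonneg t)
        _ ≤ |u| * |u| := mul_le_mul ht' ht' (abs_nonneg t) (abs_nonneg u)
        _ = u ^ 2 := by rw [← abs_mul, abs_mul_self]; ring
    · exact convex_uIcc 0 u
    · exact Set.left_mem_uIcc
    · exact Set.right_mem_uIcc
  simp only [Real.sin_zero, Real.cos_zero, zero_mul, sub_zero, Real.norm_eq_abs] at key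
  calc |Real.sin u - u * Real.cos u| ≤ u ^ 2 * |u| := key
    _ = |u| ^ 3 := by rw [← sq_abs]; ring

noncomputable def fB (B ω : ℝ) : ℝ :=
  (4 / ω ^ 4) * (ω * B * Real.cos (B * ω) - Real.sin (B * ω)) ^ 2

noncomputable def stB (B ω : ℝ) : ℝ :=
  if ω = 0 then 2 * B else Real.sin (2 * B * ω) / ω

noncomputable def GB (B ω : ℝ) : ℝ :=
  2 / 3 * (2 * B * ω * Real.sin (2 * B * ω) + (1 + B ^ 2 * ω ^ 2) * Real.cos (2 * B * ω)
    - 1 - 3 * B ^ 2 * ω ^ 2) / ω ^ 3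

private lemma fB_bound (B ω : ℝ) : |fB B ω| ≤ 4 * B ^ 6 * ω ^ 2 := by
  rcases eq_or_ne ω 0 with rfl | hω
  · simp [fB]
  · have hd : |ω * B * Real.cos (B * ω) - Real.sin (B * ω)| ≤ |B * ω| ^ 3 := by
      have h := mvt_bound (B * ω)
      calc |ω * B * Real.cos (B * ω) - Real.sin (B * ω)|
          = |Real.sin (B * ω) - B * ω * Real.cos (B * ω)| := by
            rw [abs_sub_comm]; ring_nf
        _ ≤ |B * ω| ^ 3 := h
    have hsq : (ω * B * Real.cos (B * ω) - Real.sin (B * ω)) ^ 2 ≤ (B * ω) ^ 6 := by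
      have h1 : (ω * B * Real.cos (B * ω) - Real.sin (B * ω)) ^ 2
          = |ω * B * Real.cos (B * ω) - Real.sin (B * ω)| ^ 2 := (sq_abs _).symm
      have h2 : |ω * B * Real.cos (B * ω) - Real.sin (B * ω)| ^ 2 ≤ (|B * ω| ^ 3) ^ 2 :=
        pow_le_pow_left₀ (abs_nonneg _) hd 2
      have h3 : (|B * ω| ^ 3) ^ 2 = (B * ω) ^ 6 := by
        rw [← pow_mul, ← abs_pow, abs_of_nonneg (by positivity : (0:ℝ) ≤ (B * ω) ^ 6)]
      rw [h1]; rw [h3] at h2; exact h2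
    have hf0 : 0 ≤ fB B ω := by unfold fB; positivity
    rw [abs_of_nonneg hf0]
    unfold fB
    calc (4 / ω ^ 4) * (ω * B * Real.cos (B * ω) - Real.sin (B * ω)) ^ 2
        ≤ (4 / ω ^ 4) * (B * ω) ^ 6 := by
          apply mul_le_mul_of_nonneg_left hsq (by positivity)
      _ = 4 * B ^ 6 * ω ^ 2 := by field_simp

private lemma fB_cont (B : ℝ) : Continuous (fB B) := by
  rw [continuous_iff_continuousAt]
  intro x
  rcases eq_or_ne x 0 with rfl | hx
  · have h0 : fB B 0 = 0 := by simp [fB]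
    rw [ContinuousAt, h0]
    apply squeeze_zero_norm (fun ω => fB_bound B ω)
    have : Continuous fun ω : ℝ => 4 * B ^ 6 * ω ^ 2 := by fun_prop
    simpa using this.tendsto' 0 0 (by norm_num)
  · unfold fB
    have h1 : ContinuousAt (fun ω : ℝ => 4 / ω ^ 4) x :=
      continuousAt_const.div ((continuous_pow 4).continuousAt) (pow_ne_zero 4 hx)
    exact h1.mul (by fun_prop)

private lemma stB_even (B x : ℝ) : stB B (-x) = stB B x := by
  unfold stB
  rcases eq_or_ne x 0 with rfl | hx
  · simp
  · rw [if_neg (neg_ne_zero.2 hx), if_neg hx]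
    rw [show 2 * B * -x = -(2 * B * x) by ring, Real.sin_neg]
    field_simp

private lemma stB_cont (B : ℝ) : Continuous (stB B) := by
  rw [continuous_iff_continuousAt]
  intro x
  rcases eq_or_ne x 0 with rfl | hx
  · rw [ContinuousAt]
    have hst0 : stB B 0 = 2 * B := if_pos rfl
    rw [hst0, ← nhdsNE_sup_pure, tendsto_sup]
    constructor
    · have hder : HasDerivAt (fun y : ℝ => Real.sin (2 * B * y)) (2 * B) 0 := by
        have h := HasDerivAt.sin (x := (0:ℝ))
          (by simpa using (hasDerivAt_id (0:ℝ)).const_mul (2 * B) :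
            HasDerivAt (fun y : ℝ => 2 * B * y) (2 * B) 0)
        simpa using h
      have := hasDerivAt_iff_tendsto_slope.1 hder
      apply this.congr'
      filter_upwards [self_mem_nhdsWithin] with y hy
      have hy' : y ≠ 0 := hy
      rw [slope_def_field, stB, if_neg hy']
      simp
    · have : stB B 0 = 2 * B := hst0
      simpa [this] using tendsto_pure_nhds (stB B) 0
  · have hev : (fun ω : ℝ => Real.sin (2 * B * ω) / ω) =ᶠ[nhds x] stB B := by
      filter_upwards [isOpen_compl_singleton.mem_nhds hx] with y hy
      have hy' : y ≠ 0 := hy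
      rw [stB, if_neg hy']
    apply ContinuousAt.congr _ hev
    exact (by fun_prop : Continuous fun ω : ℝ => Real.sin (2 * B * ω)).continuousAt.div
      continuousAt_id hx

private lemma GB_deriv (B x : ℝ) :
    HasDerivAt (GB B) (fB B x - 4 * B ^ 3 / 3 * stB B x) x := by
  rcases eq_or_ne x 0 with rfl | hx
  · rw [hasDerivAt_iff_tendsto_slope]
    have hd1 : HasDerivAt (fun y : ℝ => Real.sin (B * y)) B 0 := by
      have h := HasDerivAt.sin (x := (0:ℝ))
        (by simpa using (hasDerivAt_id (0:ℝ)).const_mul B :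
          HasDerivAt (fun y : ℝ => B * y) B 0)
      simpa using h
    have t1 : Tendsto (fun y : ℝ => Real.sin (B * y) / y) (nhdsWithin 0 {(0:ℝ)}ᶜ) (nhds B) := by
      apply (hasDerivAt_iff_tendsto_slope.1 hd1).congr'
      filter_upwards [self_mem_nhdsWithin] with y hy
      rw [slope_def_field]
      simp
    have t2 : Tendsto (fun y : ℝ => (Real.sin (B * y) - B * y * Real.cos (B * y)) / y ^ 2)
        (nhdsWithin 0 {(0:ℝ)}ᶜ) (nhds 0) := by
      apply squeeze_zero_norm' (a := fun y : ℝ => |B| ^ 3 * |y|)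
      · filter_upwards [self_mem_nhdsWithin] with y hy
        have hy' : (y:ℝ) ≠ 0 := hy
        have hb := mvt_bound (B * y)
        rw [Real.norm_eq_abs, abs_div, abs_pow]
        rw [abs_mul] at hb
        calc |Real.sin (B * y) - B * y * Real.cos (B * y)| / |y| ^ 2
            ≤ (|B| * |y|) ^ 3 / |y| ^ 2 :=
              (div_le_div_iff_of_pos_right (by positivity)).2 hb
          _ = |B| ^ 3 * |y| := by
              rw [mul_pow]
              field_simp [abs_ne_zero.2 hy']
      · have hc : Continuous (fun y : ℝ => |B| ^ 3 * |y|) := by fun_prop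
        exact (hc.tendsto' 0 0 (by simp)).mono_left nhdsWithin_le_nhds
    have tcomb := ((t2.mul t2).const_mul (-(4/3) : ℝ)).sub ((t1.mul t1).const_mul (8/3*B^2 : ℝ))
    have hlim : (-(4/3) : ℝ) * (0 * 0) - 8/3*B^2 * (B * B) = fB B 0 - 4 * B ^ 3 / 3 * stB B 0 := by
      simp [fB, stB]; ring
    rw [← hlim]
    apply tcomb.congr'
    filter_upwards [self_mem_nhdsWithin] with y hy
    have hy' : (y:ℝ) ≠ 0 := hy
    have hfact : 2*B*y*Real.sin (2*B*y) + (1+B^2*y^2)*Real.cos (2*B*y) - 1 - 3*B^2*y^2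
        = -2*(Real.sin (B*y) - B*y*Real.cos (B*y))^2 - 4*B^2*y^2*Real.sin (B*y)^2 := by
      rw [mul_assoc 2 B y, Real.sin_two_mul, Real.cos_two_mul]
      linear_combination (2 + 4*B^2*y^2) * Real.sin_sq_add_cos_sq (B*y)
    have hG0 : GB B 0 = 0 := by simp [GB]
    rw [slope_def_field, hG0, sub_zero, sub_zero]
    simp only [GB]
    rw [hfact]
    field_simp
    ring
  · have hid : HasDerivAt (fun y : ℝ => 2 * B * y) (2 * B) x := by
      simpa using (hasDerivAt_id x).const_mul (2 * B)
    have hs2 : HasDerivAt (fun y : ℝ => Real.sin (2 * B * y))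
        (Real.cos (2 * B * x) * (2 * B)) x := hid.sin
    have hc2 : HasDerivAt (fun y : ℝ => Real.cos (2 * B * y))
        (-Real.sin (2 * B * x) * (2 * B)) x := hid.cos
    have hq1 : HasDerivAt (fun y : ℝ => 1 + B ^ 2 * y ^ 2) (B ^ 2 * (2 * x)) x := by
      simpa using (hasDerivAt_pow 2 x).const_mul (B ^ 2)
    have hq2 : HasDerivAt (fun y : ℝ => 3 * B ^ 2 * y ^ 2) (3 * B ^ 2 * (2 * x)) x := by
      simpa using (hasDerivAt_pow 2 x).const_mul (3 * B ^ 2)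
    have hnum := ((((hid.mul hs2).add (hq1.mul hc2)).sub (hasDerivAt_const x (1:ℝ))).sub
      hq2).const_mul (2/3 : ℝ)
    have hdiv := hnum.div (hasDerivAt_pow 3 x) (pow_ne_zero 3 hx)
    convert hdiv using 1
    · rfl
    · rfl
    · rfl
    rw [stB, if_neg hx]
    unfold fB
    simp only [Pi.mul_apply, Pi.add_apply, Pi.sub_apply]
    have hsq : (x * B * Real.cos (B * x) - Real.sin (B * x)) ^ 2
        = x ^ 2 * B ^ 2 * (1 + Real.cos (2 * (B * x))) / 2 - x * B * Real.sin (2 * (B * x))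
          + (1 - Real.cos (2 * (B * x))) / 2 := by
      rw [Real.sin_two_mul, Real.cos_two_mul]
      linear_combination Real.sin_sq_add_cos_sq (B * x)
    rw [show (2:ℝ) * B * x = 2 * (B * x) from mul_assoc 2 B x, hsq]
    push_cast
    field_simp
    ring

/-- The band-limited energy of the Fourier transform of `β ↦ β·I_B(β)`:
`∫_{−W}^{W} (4/ω⁴)(ωB cos(Bω) − sin(Bω))² dω` expressed via the sine integral. -/
theorem banded_energy_fourier_beta_indicator (B W : ℝ) (hB : 0 < B) (hW : 0 < W) :
    ∫ ω in (-W)..W, (4 / ω ^ 4) * (ω * B * Real.cos (B * ω) - Real.sin (B * ω)) ^ 2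
      = 4 * B ^ 3 *
          ((2 / 3) * (∫ x in (0 : ℝ)..(2 * W * B), Real.sin x / x) +
            (2 * W * B * Real.sin (2 * W * B) +
              (1 + W ^ 2 * B ^ 2) * Real.cos (2 * W * B) - 1 - 3 * W ^ 2 * B ^ 2) /
              (3 * (W * B) ^ 3)) := by
  have hBne : B ≠ 0 := ne_of_gt hB
  have hWne : W ≠ 0 := ne_of_gt hW
  have hfc := fB_cont B
  have hstc := stB_cont B
  have hhc : Continuous (fun x => fB B x - 4 * B ^ 3 / 3 * stB B x) :=
    hfc.sub (continuous_const.mul hstc)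
  have hFTC : ∫ x in (-W)..W, (fB B x - 4 * B ^ 3 / 3 * stB B x) = GB B W - GB B (-W) :=
    intervalIntegral.integral_eq_sub_of_hasDerivAt (fun x _ => GB_deriv B x)
      (hhc.intervalIntegrable _ _)
  have hGodd : GB B (-W) = -GB B W := by
    simp only [GB]
    rw [show 2 * B * -W = -(2 * B * W) by ring, Real.sin_neg, Real.cos_neg]
    ring
  have hsplit : ∫ x in (-W)..W, fB B x
      = (∫ x in (-W)..W, (fB B x - 4 * B ^ 3 / 3 * stB B x))
        + 4 * B ^ 3 / 3 * ∫ x in (-W)..W, stB B x := by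
    rw [← intervalIntegral.integral_const_mul, ← intervalIntegral.integral_add
      (f := fun x => fB B x - 4 * B ^ 3 / 3 * stB B x) (g := fun x => 4 * B ^ 3 / 3 * stB B x)
      (hhc.intervalIntegrable _ _) ((continuous_const.mul hstc : Continuous fun x => 4 * B ^ 3 / 3 * stB B x).intervalIntegrable _ _)]
    apply intervalIntegral.integral_congr
    intro x _
    ring
  have hst1 : ∫ x in (-W)..(0:ℝ), stB B x = ∫ x in (0:ℝ)..W, stB B x := by
    have h := intervalIntegral.integral_comp_neg (a := (0:ℝ)) (b := W) (stB B)
    simp only [stB_even, neg_zero] at h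
    exact h.symm
  have hadj : ∫ x in (-W)..W, stB B x = 2 * ∫ x in (0:ℝ)..W, stB B x := by
    rw [← intervalIntegral.integral_add_adjacent_intervals (a := -W) (b := (0:ℝ)) (c := W)
      (hstc.intervalIntegrable _ _) (hstc.intervalIntegrable _ _), hst1]
    ring
  have hae0 : ∀ᵐ (x : ℝ) ∂volume, x ≠ 0 := by
    have hset : {x : ℝ | ¬ x ≠ 0} = {0} := by ext x; simp
    rw [ae_iff, hset]
    exact measure_singleton 0
  have hsub : ∫ x in (0:ℝ)..W, stB B x = ∫ x in (0:ℝ)..(2 * W * B), Real.sin x / x := by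
    have hae : ∀ᵐ (x : ℝ) ∂volume, x ∈ Set.uIoc (0:ℝ) W →
        stB B x = 2 * B * ((fun y => Real.sin y / y) (2 * B * x)) := by
      filter_upwards [hae0] with x hx _
      rw [stB, if_neg hx]
      have h2 : 2 * B * x ≠ 0 := by positivity
      field_simp
    rw [intervalIntegral.integral_congr_ae hae, intervalIntegral.integral_const_mul,
      intervalIntegral.integral_comp_mul_left (fun y => Real.sin y / y)
        (by positivity : (2 * B : ℝ) ≠ 0)]
    rw [smul_eq_mul, mul_zero, show 2 * B * W = 2 * W * B by ring]
    field_simp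
  have hL : (∫ ω in (-W)..W, (4 / ω ^ 4) * (ω * B * Real.cos (B * ω) - Real.sin (B * ω)) ^ 2)
      = ∫ x in (-W)..W, fB B x := rfl
  rw [hL, hsplit, hFTC, hGodd, hadj, hsub]
  simp only [GB]
  rw [show 2 * B * W = 2 * W * B by ring]
  field_simp
  ring
end

section
/- Let Ω, R, ρ, D, D_W, W_v be positive real numbers. Let M be the 3×3 real matrix with rows (Ω(R+ρ), 2ΩR, −2ΩR), (Ωρ + D, −D, D), (W_v, W_v, W_v), and let U = π·diag(1/(Ω(R+ρ)), 1/(Ωρ + D_W), 1/W_v). Then the sampling-rate gain ratio ((2π)³/|det M|) / det U equals 4(R+ρ)(Ωρ + D_W)/(2RΩρ + (3R+ρ)D). -/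
/-- The sampling-rate gain ratio `det(T)/det(U)` between the efficient
sampling lattice `T` (with `|det T| = (2π)³/|det M|`) and the standard uniform
sampling lattice `U` equals `4(R+ρ)(Ωρ + D_W)/(2RΩρ + (3R+ρ)D)`. -/
theorem sampling_gain_ratio (Ω R ρ D DW Wv : ℝ)
    (hΩ : 0 < Ω) (hR : 0 < R) (hρ : 0 < ρ) (hD : 0 < D) (hDW : 0 < DW)
    (hWv : 0 < Wv)
    (M U : Matrix (Fin 3) (Fin 3) ℝ)
    (hM : M = !![Ω * (R + ρ), 2 * Ω * R, -(2 * Ω * R);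
                 Ω * ρ + D, -D, D;
                 Wv, Wv, Wv])
    (hU : U = !![Real.pi / (Ω * (R + ρ)), 0, 0;
                 0, Real.pi / (Ω * ρ + DW), 0;
                 0, 0, Real.pi / Wv]) :
    ((2 * Real.pi) ^ 3 / |Matrix.det M|) / Matrix.det U
      = 4 * (R + ρ) * (Ω * ρ + DW) / (2 * R * Ω * ρ + (3 * R + ρ) * D) := by
  subst hM hU
  rw [Matrix.det_fin_three, Matrix.det_fin_three]
  norm_num [Matrix.cons_val_zero, Matrix.cons_val_one, Matrix.head_cons,
    Matrix.cons_val_two, Matrix.tail_cons]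
  have hdet : -(Ω * (R + ρ) * D * Wv) - Ω * (R + ρ) * D * Wv - 2 * Ω * R * (Ω * ρ + D) * Wv +
      2 * Ω * R * D * Wv + -(2 * Ω * R * (Ω * ρ + D) * Wv) - 2 * Ω * R * D * Wv
      = -(2 * Ω * Wv * (2 * R * Ω * ρ + (3 * R + ρ) * D)) := by ring
  rw [hdet, abs_neg, abs_of_pos (by positivity)]
  have hπ := Real.pi_pos
  field_simp
  ring
end
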